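/- For any n×n complex matrix D, the bicommutant algebra {D}'' (all matrices commuting with every matrix that commutes with D) satisfies property (C1): for any linearly independent X_1,...,X_k in {D}'' there exists a vector v in C^n with X_1 v,...,X_k v linearly independent. -/

import Mathlib

open Matrix

/-- Property (C1) of a set of matrices. -/
def HasC1 {n q : Type*} [Fintype q] (W : Set (Matrix n q ℂ)) : Prop :=
  ∀ (k : ℕ) (X : Fin k → Matrix n q ℂ), (∀ i, X i ∈ W) → LinearIndependent ℂ X →
    ∃ v : q → ℂ, LinearIndependent ℂ fun i => (X i).mulVec v

/-- The bicommutant of `D` in `ℂ^{n×n}`. -/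
def bicommutant {n : ℕ} (D : Matrix (Fin n) (Fin n) ℂ) : Set (Matrix (Fin n) (Fin n) ℂ) :=
  {X | ∀ C : Matrix (Fin n) (Fin n) ℂ, C * D = D * C → X * C = C * X}

open Polynomial Module DirectSum in
/-- Key lemma: there is a vector `v` such that every vector `w` is of the form `C *ᵥ v`
for some `C` commuting with `D`. -/
theorem exists_good_vec {n : ℕ} (D : Matrix (Fin n) (Fin n) ℂ) :
    ∃ v : Fin n → ℂ, ∀ w : Fin n → ℂ, ∃ C : Matrix (Fin n) (Fin n) ℂ,
      C * D = D * C ∧ C.mulVec v = w := by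
  classical
  set φ : (Fin n → ℂ) →ₗ[ℂ] (Fin n → ℂ) := Matrix.toLinAlgEquiv' D with hφ
  have hφ' : ∀ x, φ x = D.mulVec x := fun x => Matrix.toLinAlgEquiv'_apply D x
  -- the module is torsion over ℂ[X]
  have hT : Module.IsTorsion ℂ[X] (Module.AEval' φ) := by
    intro x
    refine ⟨⟨Matrix.charpoly D, mem_nonZeroDivisors_of_ne_zero (Matrix.charpoly_monic D).ne_zero⟩, ?_⟩
    obtain ⟨m, rfl⟩ := (Module.AEval'.of φ).surjective x
    have haev : aeval φ (Matrix.charpoly D) = 0 := by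
      have h := Polynomial.aeval_algHom_apply
        (Matrix.toLinAlgEquiv' (n := Fin n) (R := ℂ)).toAlgHom D (Matrix.charpoly D)
      rw [hφ]
      exact h.trans (by rw [Matrix.aeval_self_charpoly, map_zero])
    rw [Submonoid.smul_def, ← Module.AEval.of_aeval_smul, haev]
    simp
  obtain ⟨ι, fι, p, hp, e, ⟨Φ⟩⟩ := Module.equiv_directSum_of_isTorsion
    (R := ℂ[X]) (M := Module.AEval' φ) hT
  haveI := fι
  set Q : ι → Type := fun i => ℂ[X] ⧸ (ℂ[X] ∙ (p i ^ e i)) with hQ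
  set v' : ⨁ i, Q i := ∑ i, DirectSum.of Q i (Submodule.Quotient.mk 1) with hv'
  refine ⟨(Module.AEval'.of φ).symm (Φ.symm v'), ?_⟩
  intro w
  set w' : ⨁ i, Q i := Φ (Module.AEval'.of φ w) with hw'
  have hg : ∀ i, ∃ gi : ℂ[X], Submodule.Quotient.mk gi = w' i :=
    fun i => Submodule.Quotient.mk_surjective _ (w' i)
  choose g hgspec using hg
  -- componentwise multiplication operator
  set T : (⨁ i, Q i) →ₗ[ℂ[X]] ⨁ i, Q i :=
    DirectSum.toModule ℂ[X] ι _ (fun i => (DirectSum.lof ℂ[X] ι Q i) ∘ₗ (g i • LinearMap.id)) with hTdef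
  have hTv' : T v' = w' := by
    rw [hv', map_sum]
    have : ∀ i, T (DirectSum.of Q i (Submodule.Quotient.mk 1)) = DirectSum.of Q i (w' i) := by
      intro i
      rw [← DirectSum.lof_eq_of ℂ[X], hTdef, DirectSum.toModule_lof]
      simp only [LinearMap.comp_apply, LinearMap.smul_apply, LinearMap.id_apply]
      rw [← Submodule.Quotient.mk_smul, smul_eq_mul, mul_one, hgspec, DirectSum.lof_eq_of]
    simp_rw [this]
    exact DirectSum.sum_univ_of w'
  set Tlin : Module.AEval' φ →ₗ[ℂ[X]] Module.AEval' φ :=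
    Φ.symm.toLinearMap ∘ₗ T ∘ₗ Φ.toLinearMap with hTlin
  set Clm : (Fin n → ℂ) →ₗ[ℂ] (Fin n → ℂ) :=
    (Module.AEval'.of φ).symm.toLinearMap ∘ₗ (Tlin.restrictScalars ℂ) ∘ₗ
      (Module.AEval'.of φ).toLinearMap with hClm
  have hCcomm : ∀ x, Clm (φ x) = φ (Clm x) := by
    intro x
    rw [hClm]
    simp only [LinearMap.comp_apply, LinearEquiv.coe_coe, LinearMap.coe_restrictScalars]
    rw [← Module.AEval'.X_smul_of, _root_.map_smul, Module.AEval.of_symm_X_smul]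
    rfl
  have hCv : Clm ((Module.AEval'.of φ).symm (Φ.symm v')) = w := by
    rw [hClm]
    simp only [LinearMap.comp_apply, LinearEquiv.coe_coe, LinearMap.coe_restrictScalars]
    rw [LinearEquiv.apply_symm_apply, hTlin]
    simp only [LinearMap.comp_apply, LinearEquiv.coe_coe]
    rw [LinearEquiv.apply_symm_apply, hTv', hw', LinearEquiv.symm_apply_apply,
      LinearEquiv.symm_apply_apply]
  have hφD : LinearMap.toMatrix' φ = D := by
    have h : φ = Matrix.toLin' D := LinearMap.ext fun x => by rw [Matrix.toLin'_apply, hφ' x]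
    rw [h, LinearMap.toMatrix'_toLin']
  refine ⟨LinearMap.toMatrix' Clm, ?_, ?_⟩
  · rw [← hφD, ← LinearMap.toMatrix'_comp, ← LinearMap.toMatrix'_comp]
    exact congrArg _ (LinearMap.ext hCcomm)
  · rw [← Matrix.toLin'_apply, Matrix.toLin'_toMatrix', hCv]

/-- The bicommutant as a submodule. -/
noncomputable def bicommSub {n : ℕ} (D : Matrix (Fin n) (Fin n) ℂ) : Submodule ℂ (Matrix (Fin n) (Fin n) ℂ) where
  carrier := bicommutant D
  add_mem' := fun {A B} hA hB C hC => by rw [add_mul, mul_add, hA C hC, hB C hC]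
  zero_mem' := fun C hC => by simp
  smul_mem' := fun c A hA C hC => by rw [smul_mul_assoc, mul_smul_comm, hA C hC]

set_option maxHeartbeats 1600000 in
/-- For any `D ∈ ℂ^{n×n}`, the bicommutant `{D}''` satisfies property (C1). -/
theorem stmt10 {n : ℕ} (D : Matrix (Fin n) (Fin n) ℂ) :
    HasC1 (bicommutant D) := by
  intro k X hX hli
  obtain ⟨v, hv⟩ := exists_good_vec D
  have key : ∀ A ∈ bicommutant D, A.mulVec v = 0 → A = 0 := by
    intro A hA h0
    have hall : ∀ w, A.mulVec w = 0 := by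
      intro w
      obtain ⟨C, hCD, hCv⟩ := hv w
      have hcomm := hA C hCD
      calc A.mulVec w = A.mulVec (C.mulVec v) := by rw [hCv]
        _ = (A * C).mulVec v := by rw [Matrix.mulVec_mulVec]
        _ = (C * A).mulVec v := by rw [hcomm]
        _ = C.mulVec (A.mulVec v) := by rw [Matrix.mulVec_mulVec]
        _ = 0 := by rw [h0, Matrix.mulVec_zero]
    ext i j
    have h := congrFun (hall (Pi.single j 1)) i
    simpa using h
  refine ⟨v, ?_⟩
  let f : Matrix (Fin n) (Fin n) ℂ →ₗ[ℂ] (Fin n → ℂ) :=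
    { toFun := fun A => A.mulVec v
      map_add' := fun A B => Matrix.add_mulVec A B v
      map_smul' := fun c A => by simp [Matrix.smul_mulVec] }
  have hdisj : Disjoint (Submodule.span ℂ (Set.range X)) (LinearMap.ker f) := by
    rw [Submodule.disjoint_def]
    intro A hAspan hAker
    have hle : Submodule.span ℂ (Set.range X) ≤ bicommSub D :=
      Submodule.span_le.mpr (by rintro _ ⟨i, rfl⟩; exact hX i)
    exact key A (hle hAspan) (by simpa [f] using hAker)
  have hmap := hli.map hdisj
  have heq : (⇑f ∘ X) = fun i => (X i).mulVec v := funext fun i => rfl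
  rwa [heq] at hmap
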